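/- Let P be a finite Γ-colored d-complete poset with Γ simply laced, and let x < y in P be such that the closed interval [x,y] is a chain. Then the coloring κ is injective on [x,y]; i.e., there are no repeated colors in this interval. -/

import Mathlib

/-!
Common definitions: Dynkin diagram data, Γ-colored posets, and the coloring
properties EC, NA, AC, ICE2, UCB1, LCB1 from the paper, together with
Γ-colored d-complete and Γ-colored minuscule posets, top trees, slant
irreducibility, extensions, lower frontier censuses, and full heaps.
-/

universe u v w

variable {Γ : Type u} {P : Type v}

/-- The integers `θ a b` form a Dynkin diagram datum. -/
def DynkinDatum (θ : Γ → Γ → ℤ) : Prop :=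
  (∀ a : Γ, θ a a = 2) ∧ (∀ a b : Γ, a ≠ b → θ a b ≤ 0) ∧
    (∀ a b : Γ, a ≠ b → (θ a b = 0 ↔ θ b a = 0))

/-- Colors `a` and `b` are adjacent. -/
def AdjColor (θ : Γ → Γ → ℤ) (a b : Γ) : Prop := θ a b < 0

/-- The Dynkin diagram is simply laced. -/
def SimplyLaced (θ : Γ → Γ → ℤ) : Prop :=
  ∀ a b : Γ, a ≠ b → θ a b = 0 ∨ θ a b = -1

/-- All closed intervals are finite. -/
def LocallyFinitePoset (α : Type*) [PartialOrder α] : Prop :=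
  ∀ x y : α, (Set.Icc x y).Finite

/-- A poset is connected if it cannot be written as a disjoint union of two nonempty
subposets with no comparabilities between them. -/
def ConnectedPoset (α : Type*) [PartialOrder α] : Prop :=
  ∀ S : Set α, S.Nonempty → Sᶜ.Nonempty → ∃ x ∈ S, ∃ y ∈ Sᶜ, x ≤ y ∨ y ≤ x

section
variable [PartialOrder P]

/-- (EC) Elements with equal colors are comparable. -/
def ColoredEC (κ : P → Γ) : Prop := ∀ x y : P, κ x = κ y → x ≤ y ∨ y ≤ x

/-- (NA) Neighbors have adjacent colors. -/
def ColoredNA (θ : Γ → Γ → ℤ) (κ : P → Γ) : Prop :=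
  ∀ x y : P, x ⋖ y → AdjColor θ (κ x) (κ y)

/-- (AC) Elements with adjacent colors are comparable. -/
def ColoredAC (θ : Γ → Γ → ℤ) (κ : P → Γ) : Prop :=
  ∀ x y : P, AdjColor θ (κ x) (κ y) → x ≤ y ∨ y ≤ x

/-- (ICE2) Between consecutive elements of a color `a`, the census of colors
adjacent to `a` is two. -/
def ColoredICE2 (θ : Γ → Γ → ℤ) (κ : P → Γ) : Prop :=
  ∀ (a : Γ) (x y : P), κ x = a → κ y = a → x < y → (∀ z ∈ Set.Ioo x y, κ z ≠ a) →
    (∑ᶠ z ∈ Set.Ioo x y, -θ (κ z) a) = 2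

/-- `U(x,P)`: elements above `x` with color adjacent to that of `x`. -/
def USet (θ : Γ → Γ → ℤ) (κ : P → Γ) (x : P) : Set P :=
  {y : P | x < y ∧ AdjColor θ (κ y) (κ x)}

/-- `L(x,P)`: elements below `x` with color adjacent to that of `x`. -/
def LSet (θ : Γ → Γ → ℤ) (κ : P → Γ) (x : P) : Set P :=
  {y : P | y < x ∧ AdjColor θ (κ y) (κ x)}

/-- (UCB1) Upper frontier census bound. -/
def ColoredUCB1 (θ : Γ → Γ → ℤ) (κ : P → Γ) : Prop :=
  ∀ x : P, (∀ y : P, κ y = κ x → ¬x < y) →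
    (USet θ κ x).Finite ∧ (∑ᶠ y ∈ USet θ κ x, -θ (κ y) (κ x)) ≤ 1

/-- (LCB1) Lower frontier census bound. -/
def ColoredLCB1 (θ : Γ → Γ → ℤ) (κ : P → Γ) : Prop :=
  ∀ x : P, (∀ y : P, κ y = κ x → ¬y < x) →
    (LSet θ κ x).Finite ∧ (∑ᶠ y ∈ LSet θ κ x, -θ (κ y) (κ x)) ≤ 1

/-- A Γ-colored d-complete poset: locally finite, surjectively colored, and
satisfying EC, NA, AC, ICE2, and UCB1. -/
def GColoredDComplete (θ : Γ → Γ → ℤ) (κ : P → Γ) : Prop :=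
  LocallyFinitePoset P ∧ Function.Surjective κ ∧ ColoredEC κ ∧ ColoredNA θ κ ∧
    ColoredAC θ κ ∧ ColoredICE2 θ κ ∧ ColoredUCB1 θ κ

/-- A Γ-colored minuscule poset: Γ-colored d-complete and LCB1. -/
def GColoredMinuscule (θ : Γ → Γ → ℤ) (κ : P → Γ) : Prop :=
  GColoredDComplete θ κ ∧ ColoredLCB1 θ κ

/-- The top tree: the set of elements maximal in their color class. -/
def TopTree (κ : P → Γ) : Set P := {x : P | ∀ y : P, κ y = κ x → ¬x < y}

/-- `x` is covered by `y` within the subposet `S`. -/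
def CoversIn (S : Set P) (x y : P) : Prop :=
  x ∈ S ∧ y ∈ S ∧ x < y ∧ ∀ z ∈ S, x < z → ¬z < y

/-- Slant irreducibility of a Γ-colored d-complete poset. -/
def SlantIrreducible (κ : P → Γ) : Prop :=
  ConnectedPoset P ∧ ∀ x y : P, CoversIn (TopTree κ) x y → ∃ z : P, z ≠ y ∧ κ z = κ y

/-- A saturated chain in a subposet `S`: a chain that is convex in `S`. -/
def SaturatedChainIn (S C : Set P) : Prop :=
  C ⊆ S ∧ IsChain (· ≤ ·) C ∧ ∀ x ∈ C, ∀ y ∈ C, ∀ z ∈ S, x < z → z < y → z ∈ C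

/-- The lower frontier census at the element `y`. -/
noncomputable def LCensus (θ : Γ → Γ → ℤ) (κ : P → Γ) (y : P) : ℤ :=
  ∑ᶠ x ∈ LSet θ κ y, -θ (κ x) (κ y)

/-- A full heap: locally finite, surjectively colored, EC, NA, AC, ICE2, and every
color class order-isomorphic to ℤ. -/
def FullHeap (θ : Γ → Γ → ℤ) (κ : P → Γ) : Prop :=
  LocallyFinitePoset P ∧ Function.Surjective κ ∧ ColoredEC κ ∧ ColoredNA θ κ ∧
    ColoredAC θ κ ∧ ColoredICE2 θ κ ∧ ∀ a : Γ, Nonempty ({x : P // κ x = a} ≃o ℤ)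

end

/-- `ι` realizes the colored poset `A` as an order filter of the colored poset `B`. -/
def FilterEmbedding {G : Type*} {A B : Type*} [PartialOrder A] [PartialOrder B]
    (κ : A → G) (κ' : B → G) (ι : A → B) : Prop :=
  (∀ p q : A, ι p ≤ ι q ↔ p ≤ q) ∧ (∀ p : A, κ' (ι p) = κ p) ∧ IsUpperSet (Set.range ι)

/-- `B` is an extension of `A` by the color `a`, with extending element `x`. -/
def IsExtensionBy {G : Type*} {A B : Type*} [PartialOrder A] [PartialOrder B]
    (θ : G → G → ℤ) (κ : A → G) (κ' : B → G) (a : G) (ι : A → B) (x : B) : Prop :=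
  Finite B ∧ GColoredDComplete θ κ' ∧ ConnectedPoset B ∧
    FilterEmbedding κ κ' ι ∧ (Set.range ι)ᶜ = {x} ∧ κ' x = a

/-! ### Auxiliary lemmas for STATEMENT 3 -/

section CIPAux

variable (θ : Γ → Γ → ℤ)

lemma CIP_adj_ne {a b : Γ} (hθ : DynkinDatum θ) (h : AdjColor θ a b) : a ≠ b := by
  rintro rfl; rw [AdjColor, hθ.1 a] at h; omega

lemma CIP_adj_symm {a b : Γ} (hθ : DynkinDatum θ) (h : AdjColor θ a b) : AdjColor θ b a := by
  have hne := CIP_adj_ne θ hθ h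
  have h2 := hθ.2.2 a b hne
  have h3 := hθ.2.1 b a hne.symm
  rw [AdjColor] at h ⊢
  omega

lemma CIP_adj_neg_one {a b : Γ} (hθ : DynkinDatum θ) (hsl : SimplyLaced θ)
    (h : AdjColor θ a b) : -θ a b = 1 := by
  rcases hsl a b (CIP_adj_ne θ hθ h) with h' | h' <;> rw [AdjColor] at h <;> omega

end CIPAux

/-- In a finite `ℤ`-valued sum of zeros and ones equal to `2`, a term equal to `1` has
exactly one companion. -/
lemma CIP_sum_two {α : Type*} (s : Finset α) (f : α → ℤ)
    (h01 : ∀ z ∈ s, f z = 0 ∨ f z = 1) (hsum : ∑ z ∈ s, f z = 2)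
    {q : α} (hq : q ∈ s) (hfq : f q = 1) :
    ∃ r ∈ s, r ≠ q ∧ f r = 1 ∧ ∀ z ∈ s, f z = 1 → z = q ∨ z = r := by
  classical
  have h1 : ∑ z ∈ s.erase q, f z = 1 := by
    have := Finset.add_sum_erase s f hq
    omega
  have hex : ∃ r ∈ s.erase q, f r = 1 := by
    by_contra h
    push_neg at h
    have hz0 : ∑ z ∈ s.erase q, f z = 0 := Finset.sum_eq_zero (fun z hz => by
      rcases h01 z (Finset.mem_of_mem_erase hz) with h0 | h0
      · exact h0
      · exact absurd h0 (h z hz))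
    omega
  obtain ⟨r, hr, hfr⟩ := hex
  have h2 : ∑ z ∈ (s.erase q).erase r, f z = 0 := by
    have := Finset.add_sum_erase (s.erase q) f hr
    omega
  have hzero : ∀ z ∈ (s.erase q).erase r, f z = 0 := by
    have hnn : ∀ z ∈ (s.erase q).erase r, 0 ≤ f z := fun z hz => by
      rcases h01 z (Finset.mem_of_mem_erase (Finset.mem_of_mem_erase hz)) with h0 | h0 <;> omega
    exact fun z hz => (Finset.sum_eq_zero_iff_of_nonneg hnn).1 h2 z hz
  refine ⟨r, Finset.mem_of_mem_erase hr, Finset.ne_of_mem_erase hr, hfr, ?_⟩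
  intro z hz hfz
  by_contra h
  push_neg at h
  have hmem : z ∈ (s.erase q).erase r :=
    Finset.mem_erase.2 ⟨h.2, Finset.mem_erase.2 ⟨h.1, hz⟩⟩
  have := hzero z hmem
  omega

section CIPMain

variable [PartialOrder P] [Fintype P] (θ : Γ → Γ → ℤ) (κ : P → Γ)

/-- A finite nonempty subset of a finite poset has a minimal element. -/
lemma CIP_exists_min (S : Set P) (hS : S.Nonempty) : ∃ m ∈ S, ∀ z ∈ S, ¬z < m := by
  obtain ⟨m, hm, hmin⟩ := Set.Finite.exists_minimalFor id S (Set.toFinite S) hS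
  exact ⟨m, hm, fun z hz hlt => hlt.not_ge (hmin hz hlt.le)⟩

/-- ICE2 in `Finset` form. -/
lemma CIP_ice2_sum (hdc : GColoredDComplete θ κ) {p t : P} (hpt : p < t)
    (hcol : κ t = κ p) (hconsec : ∀ z ∈ Set.Ioo p t, κ z ≠ κ p) :
    ∑ z ∈ (Set.toFinite (Set.Ioo p t)).toFinset, -θ (κ z) (κ p) = 2 := by
  have h := hdc.2.2.2.2.2.1 (κ p) p t rfl hcol hpt hconsec
  rwa [finsum_mem_eq_finite_toFinset_sum _ (Set.toFinite _)] at h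

/-- The census terms between consecutive elements of a color are zeros and ones. -/
lemma CIP_h01 (hθ : DynkinDatum θ) (hsl : SimplyLaced θ) {p t : P}
    (hconsec : ∀ z ∈ Set.Ioo p t, κ z ≠ κ p) :
    ∀ z ∈ (Set.toFinite (Set.Ioo p t)).toFinset,
      (fun z => -θ (κ z) (κ p)) z = 0 ∨ (fun z => -θ (κ z) (κ p)) z = 1 := by
  intro z hz
  have hzmem := (Set.Finite.mem_toFinset _).1 hz
  rcases hsl (κ z) (κ p) (hconsec z hzmem) with h | h <;> simp [h]

/-- If between consecutive elements of a color there are two distinct elements of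
adjacent colors, they are the only ones. -/
lemma CIP_census (hθ : DynkinDatum θ) (hsl : SimplyLaced θ) (hdc : GColoredDComplete θ κ)
    {p t q r : P} (hpt : p < t) (hcol : κ t = κ p)
    (hconsec : ∀ z ∈ Set.Ioo p t, κ z ≠ κ p)
    (hq : q ∈ Set.Ioo p t) (hr : r ∈ Set.Ioo p t) (hqr : q ≠ r)
    (haq : AdjColor θ (κ q) (κ p)) (har : AdjColor θ (κ r) (κ p)) :
    ∀ z ∈ Set.Ioo p t, (AdjColor θ (κ z) (κ p) ↔ (z = q ∨ z = r)) := by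
  have hsum := CIP_ice2_sum θ κ hdc hpt hcol hconsec
  have h01 := CIP_h01 θ κ hθ hsl hconsec
  have hqmem : q ∈ (Set.toFinite (Set.Ioo p t)).toFinset := (Set.Finite.mem_toFinset _).2 hq
  have hfq : -θ (κ q) (κ p) = 1 := CIP_adj_neg_one θ hθ hsl haq
  obtain ⟨r₀, hr₀mem, hr₀ne, hfr₀, huniq⟩ := CIP_sum_two _ _ h01 hsum hqmem hfq
  have hfr : -θ (κ r) (κ p) = 1 := CIP_adj_neg_one θ hθ hsl har
  have hrr₀ : r = r₀ := by
    rcases huniq r ((Set.Finite.mem_toFinset _).2 hr) hfr with h | h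
    · exact absurd h hqr.symm
    · exact h
  intro z hz
  constructor
  · intro hadj
    have hfz : -θ (κ z) (κ p) = 1 := CIP_adj_neg_one θ hθ hsl hadj
    rcases huniq z ((Set.Finite.mem_toFinset _).2 hz) hfz with h | h
    · exact Or.inl h
    · exact Or.inr (h.trans hrr₀.symm)
  · rintro (rfl | rfl)
    · exact haq
    · exact har

/-- From two distinct elements in `U(x,P)` we get an element of the color of `x`
strictly above `x`. -/
lemma CIP_two_up (hθ : DynkinDatum θ) (hsl : SimplyLaced θ) (hdc : GColoredDComplete θ κ)
    {x y1 y2 : P} (h1 : y1 ∈ USet θ κ x) (h2 : y2 ∈ USet θ κ x) (hne : y1 ≠ y2) :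
    ∃ s, κ s = κ x ∧ x < s := by
  by_contra h
  push_neg at h
  obtain ⟨hfin, hsum⟩ := hdc.2.2.2.2.2.2 x h
  rw [finsum_mem_eq_finite_toFinset_sum _ (Set.toFinite _)] at hsum
  set s := (Set.toFinite (USet θ κ x)).toFinset with hs
  have hone : ∀ z ∈ s, -θ (κ z) (κ x) = 1 := fun z hz =>
    CIP_adj_neg_one θ hθ hsl ((Set.Finite.mem_toFinset _).1 hz).2
  have hsum' : ∑ z ∈ s, -θ (κ z) (κ x) = (s.card : ℤ) := by
    rw [Finset.sum_congr rfl hone, Finset.sum_const, nsmul_eq_mul, mul_one]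
  have hcard : 1 < s.card :=
    Finset.one_lt_card.2 ⟨y1, (Set.Finite.mem_toFinset _).2 h1,
      y2, (Set.Finite.mem_toFinset _).2 h2, hne⟩
  omega

/-- The climbing invariant. -/
def CIP_J (p q r t : P) : Prop :=
  p < q ∧ q < r ∧ r < t ∧ AdjColor θ (κ p) (κ q) ∧ κ t = κ p ∧ κ r ≠ κ q ∧
    (∀ z ∈ Set.Ioo p t, κ z ≠ κ p) ∧
    (∀ z ∈ Set.Ioo p t, (AdjColor θ (κ z) (κ p) ↔ (z = q ∨ z = r)))

/-- The climbing step: from an invariant configuration we get one with strictly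
larger top element. -/
lemma CIP_step (hθ : DynkinDatum θ) (hsl : SimplyLaced θ) (hdc : GColoredDComplete θ κ)
    {p q r t : P} (hJ : CIP_J θ κ p q r t) :
    ∃ q' r' s, CIP_J θ κ q q' r' s ∧ t < s := by
  obtain ⟨hpq, hqr, hrt, hadj, hcol, hcne, hcons, hiff⟩ := hJ
  have hNA := hdc.2.2.2.1
  have hAC := hdc.2.2.2.2.1
  obtain ⟨q', hq'mem, hq'min⟩ := CIP_exists_min (Set.Ioo q t) ⟨r, hqr, hrt⟩
  obtain ⟨hqq', hq't⟩ := hq'mem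
  have hcov : q ⋖ q' := ⟨hqq', fun z hz1 hz2 => hq'min z ⟨hz1, hz2.trans hq't⟩ hz2⟩
  have hadj_qq' : AdjColor θ (κ q) (κ q') := hNA q q' hcov
  have hadj_tq : AdjColor θ (κ t) (κ q) := by rw [hcol]; exact hadj
  have hu1 : q' ∈ USet θ κ q := ⟨hqq', CIP_adj_symm θ hθ hadj_qq'⟩
  have hu2 : t ∈ USet θ κ q := ⟨hqr.trans hrt, hadj_tq⟩
  obtain ⟨s0, hs0col, hs0lt⟩ := CIP_two_up θ κ hθ hsl hdc hu1 hu2 (ne_of_lt hq't)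
  obtain ⟨s, hsmem, hsmin⟩ := CIP_exists_min {z : P | q < z ∧ κ z = κ q} ⟨s0, hs0lt, hs0col⟩
  obtain ⟨hqs, hscol⟩ := hsmem
  have hconss : ∀ z ∈ Set.Ioo q s, κ z ≠ κ q := fun z hz hzc => hsmin z ⟨hz.1, hzc⟩ hz.2
  have hqp_ne : κ q ≠ κ p := (CIP_adj_ne θ hθ hadj).symm
  have hst : t < s := by
    rcases hAC s t (by rw [hscol, hcol]; exact CIP_adj_symm θ hθ hadj) with h | h
    · have hsne : s ≠ t := fun heq => hqp_ne (by rw [← hscol, heq]; exact hcol)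
      have hslt : s < t := lt_of_le_of_ne h hsne
      have hsIoo : s ∈ Set.Ioo p t := ⟨hpq.trans hqs, hslt⟩
      have hsadj : AdjColor θ (κ s) (κ p) := by
        rw [hscol]; exact CIP_adj_symm θ hθ hadj
      rcases (hiff s hsIoo).1 hsadj with h' | h'
      · exact absurd h' (ne_of_gt hqs)
      · exact absurd (h' ▸ hscol) hcne
    · exact lt_of_le_of_ne h (fun heq => hqp_ne (by rw [← hscol, ← heq]; exact hcol))
  have hq'Ioo : q' ∈ Set.Ioo q s := ⟨hqq', hq't.trans hst⟩
  have htIoo : t ∈ Set.Ioo q s := ⟨hqr.trans hrt, hst⟩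
  have hiff' := CIP_census θ κ hθ hsl hdc hqs hscol hconss hq'Ioo htIoo
    (ne_of_lt hq't) (CIP_adj_symm θ hθ hadj_qq') hadj_tq
  have htq'ne : κ t ≠ κ q' := by
    intro heq
    exact hcons q' ⟨hpq.trans hqq', hq't⟩ (heq ▸ hcol)
  exact ⟨q', t, s, ⟨hqq', hq't, hst, hadj_qq', hscol, htq'ne, hconss, hiff'⟩, hst⟩

end CIPMain

/-- In a finite Γ-colored d-complete poset with Γ simply laced, a closed
interval which is a chain has no repeated colors. -/
theorem chain_interval_injOn [Fintype Γ] [PartialOrder P] [Fintype P]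
    (θ : Γ → Γ → ℤ) (κ : P → Γ) (hθ : DynkinDatum θ) (hsl : SimplyLaced θ)
    (hdc : GColoredDComplete θ κ) (x y : P) (hxy : x < y)
    (hchain : IsChain (· ≤ ·) (Set.Icc x y)) :
    Set.InjOn κ (Set.Icc x y) := by
  classical
  have hEC := hdc.2.2.1
  have hNA := hdc.2.2.2.1
  -- Suppose not; we find a "bad pair": a chain interval with equal colored endpoints.
  intro u0 hu0 v0 hv0 hcol0
  by_contra hne0
  set Bad : Set (P × P) :=
    {w : P × P | w.1 < w.2 ∧ κ w.1 = κ w.2 ∧ IsChain (· ≤ ·) (Set.Icc w.1 w.2)} with hBad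
  have hBadne : Bad.Nonempty := by
    have hchain' : ∀ a b : P, a ∈ Set.Icc x y → b ∈ Set.Icc x y → a < b →
        IsChain (· ≤ ·) (Set.Icc a b) :=
      fun a b ha hb _ => IsChain.mono (Set.Icc_subset_Icc ha.1 hb.2) hchain
    rcases hEC u0 v0 (by rw [hcol0]) with h | h
    · have hlt : u0 < v0 := lt_of_le_of_ne h hne0
      exact ⟨(u0, v0), hlt, hcol0, hchain' u0 v0 hu0 hv0 hlt⟩
    · have hlt : v0 < u0 := lt_of_le_of_ne h (Ne.symm hne0)
      exact ⟨(v0, u0), hlt, hcol0.symm, hchain' v0 u0 hv0 hu0 hlt⟩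
  -- Choose a bad pair with minimal interval cardinality.
  obtain ⟨w, hw, hwmin⟩ := Set.Finite.exists_minimalFor
    (fun w : P × P => (Set.toFinite (Set.Icc w.1 w.2)).toFinset.card) Bad
    (Set.toFinite Bad) hBadne
  obtain ⟨huv, hcoluv, hchainuv⟩ := hw
  set u := w.1
  set v := w.2
  have hminsub : ∀ w' ∈ Bad, ¬(Set.Icc w'.1 w'.2 ⊂ Set.Icc u v) := by
    intro w' hw' hss
    have h1 : (Set.toFinite (Set.Icc w'.1 w'.2)).toFinset.card <
        (Set.toFinite (Set.Icc u v)).toFinset.card :=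
      Finset.card_lt_card (Set.Finite.toFinset_ssubset_toFinset.2 hss)
    have : (Set.toFinite (Set.Icc u v)).toFinset.card ≤
        (Set.toFinite (Set.Icc w'.1 w'.2)).toFinset.card := hwmin hw' h1.le
    omega
  -- No repetition of the color of `u` strictly inside the interval.
  have hconsec : ∀ z ∈ Set.Ioo u v, κ z ≠ κ u := by
    intro z hz hzc
    refine hminsub (u, z) ⟨hz.1, hzc.symm, ?_⟩ ?_
    · exact IsChain.mono (Set.Icc_subset_Icc le_rfl hz.2.le) hchainuv
    · constructor
      · exact Set.Icc_subset_Icc le_rfl hz.2.le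
      · intro hsub
        have hv : v ∈ Set.Icc u z := hsub ⟨huv.le, le_rfl⟩
        exact hz.2.not_ge hv.2
  -- ICE2 census on `(u,v)`.
  have hsum := CIP_ice2_sum θ κ hdc huv hcoluv.symm hconsec
  have h01 := CIP_h01 θ κ hθ hsl hconsec
  -- The open interval is nonempty; take its minimum `q`, a cover of `u`.
  have hIoone : (Set.Ioo u v).Nonempty := by
    by_contra h
    rw [Set.not_nonempty_iff_eq_empty] at h
    have hempty : (Set.toFinite (Set.Ioo u v)).toFinset = ∅ := Set.Finite.toFinset_eq_empty.2 h
    rw [hempty, Finset.sum_empty] at hsum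
    exact absurd hsum (by norm_num)
  obtain ⟨q, hqIoo, hqmin⟩ := CIP_exists_min (Set.Ioo u v) hIoone
  have hcovq : u ⋖ q := ⟨hqIoo.1, fun z hz1 hz2 =>
    hqmin z ⟨hz1, hz2.trans hqIoo.2⟩ hz2⟩
  have hadj_uq : AdjColor θ (κ u) (κ q) := hNA u q hcovq
  have hadj_qu : AdjColor θ (κ q) (κ u) := CIP_adj_symm θ hθ hadj_uq
  have hfq : -θ (κ q) (κ u) = 1 := CIP_adj_neg_one θ hθ hsl hadj_qu
  -- There is exactly one more contributor `r`.
  obtain ⟨r, hrmem, hrq, hfr, -⟩ := CIP_sum_two _ _ h01 hsum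
    ((Set.Finite.mem_toFinset _).2 hqIoo) hfq
  have hrIoo : r ∈ Set.Ioo u v := (Set.Finite.mem_toFinset _).1 hrmem
  have hadj_ru : AdjColor θ (κ r) (κ u) := by rw [AdjColor]; omega
  -- `q < r` by the chain property and minimality of `q`.
  have hqr : q < r := by
    rcases hchainuv (Set.Ioo_subset_Icc_self hqIoo) (Set.Ioo_subset_Icc_self hrIoo)
      (Ne.symm hrq) with h | h
    · exact lt_of_le_of_ne h (Ne.symm hrq)
    · exact absurd (lt_of_le_of_ne h hrq) (hqmin r hrIoo)
  -- `κ r ≠ κ q`, otherwise a smaller bad pair.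
  have hcolrq : κ r ≠ κ q := by
    intro heq
    refine hminsub (q, r) ⟨hqr, heq.symm, ?_⟩ ?_
    · exact IsChain.mono (Set.Icc_subset_Icc hqIoo.1.le hrIoo.2.le) hchainuv
    · constructor
      · exact Set.Icc_subset_Icc hqIoo.1.le hrIoo.2.le
      · intro hsub
        have hu : u ∈ Set.Icc q r := hsub ⟨le_rfl, huv.le⟩
        exact hqIoo.1.not_ge hu.1
  -- The base invariant configuration.
  have hiff := CIP_census θ κ hθ hsl hdc huv hcoluv.symm hconsec hqIoo hrIoo
    (Ne.symm hrq) hadj_qu hadj_ru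
  have hJ0 : CIP_J θ κ u q r v :=
    ⟨hqIoo.1, hqr, hrIoo.2, hadj_uq, hcoluv.symm, hcolrq, hconsec, hiff⟩
  -- Maximal top of an invariant configuration, contradiction with the climbing step.
  set S : Set P := {t : P | ∃ p q r, CIP_J θ κ p q r t} with hS
  have hSne : S.Nonempty := ⟨v, u, q, r, hJ0⟩
  obtain ⟨t, htS, htmax⟩ := Set.Finite.exists_maximalFor id S (Set.toFinite S) hSne
  obtain ⟨p', q', r', hJ⟩ := htS
  obtain ⟨q'', r'', s, hJ', hts⟩ := CIP_step θ κ hθ hsl hdc hJ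
  have hsS : s ∈ S := ⟨q', q'', r'', hJ'⟩
  exact hts.not_ge (htmax hsS hts.le)
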